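/- Let X₁, X₂, … be i.i.d. random variables with values in [0,1] and mean μ, and let μ̂ₙ = (1/n)∑_{i=1}^n Xᵢ. Fix N ∈ ℕ⁺ and y ≥ 0. Then P(∃ n ≥ N : kl(μ̂ₙ, μ) ≥ y and μ̂ₙ < μ) ≤ e^{−Ny}. -/

import Mathlib

open MeasureTheory ProbabilityTheory

/-- Binary Kullback-Leibler divergence between `Bernoulli(p)` and `Bernoulli(q)`. -/
noncomputable def klBin (p q : ℝ) : ℝ :=
  p * Real.log (p / q) + (1 - p) * Real.log ((1 - p) / (1 - q))

noncomputable def klAux (μ p : ℝ) : ℝ :=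
  p * Real.log p - p * Real.log μ + ((1 - p) * Real.log (1 - p) - (1 - p) * Real.log (1 - μ))

lemma exp_le_affine {x l : ℝ} (h0 : 0 ≤ x) (h1 : x ≤ 1) :
    Real.exp (l * x) ≤ 1 - x + x * Real.exp l := by
  have h := convexOn_exp.2 (Set.mem_univ (0:ℝ)) (Set.mem_univ l)
    (by linarith : (0:ℝ) ≤ 1 - x) h0 (by ring)
  simp only [smul_eq_mul, mul_zero, Real.exp_zero, mul_one] at h
  calc Real.exp (l * x) = Real.exp ((1-x) * 0 + x * l) := by ring_nf
    _ ≤ (1-x) * 1 + x * Real.exp l := by simpa using h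
    _ = 1 - x + x * Real.exp l := by ring

lemma klBin_eq_klAux {μ p : ℝ} (hμ0 : 0 < μ) (hμ1 : μ < 1) (hp0 : 0 ≤ p) (hp1 : p ≤ 1) :
    klBin p μ = klAux μ p := by
  unfold klBin klAux
  rcases eq_or_lt_of_le hp0 with h | h
  · rw [← h]
    simp [Real.log_div, hμ0.ne', Real.log_inv, one_div]
  · rcases eq_or_lt_of_le hp1 with h1 | h1
    · rw [h1]
      simp [Real.log_div one_ne_zero hμ0.ne']
    · rw [Real.log_div h.ne' hμ0.ne',
        Real.log_div (ne_of_gt (by linarith : (0:ℝ) < 1 - p))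
          (ne_of_gt (by linarith : (0:ℝ) < 1 - μ))]
      ring

lemma klAux_self {μ : ℝ} : klAux μ μ = 0 := by unfold klAux; ring

lemma klAux_zero {μ : ℝ} : klAux μ 0 = -Real.log (1 - μ) := by
  unfold klAux; simp

lemma klAux_continuous (μ : ℝ) : Continuous (klAux μ) := by
  unfold klAux
  exact (Real.continuous_mul_log.sub (continuous_id.mul continuous_const)).add
    ((Real.continuous_mul_log.comp (continuous_const.sub continuous_id)).sub
      ((continuous_const.sub continuous_id).mul continuous_const))

lemma klAux_strictAntiOn {μ : ℝ} (hμ0 : 0 < μ) (hμ1 : μ < 1) :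
    StrictAntiOn (klAux μ) (Set.Icc 0 μ) := by
  refine strictAntiOn_of_deriv_neg (convex_Icc 0 μ) (klAux_continuous μ).continuousOn ?_
  intro x hx
  rw [interior_Icc] at hx
  obtain ⟨hx0, hxμ⟩ := hx
  have hx1 : x < 1 := lt_trans hxμ hμ1
  have h1 : HasDerivAt (fun p => p * Real.log p) (Real.log x + 1) x :=
    Real.hasDerivAt_mul_log hx0.ne'
  have h2 : HasDerivAt (fun p : ℝ => 1 - p) (-1) x := by
    simpa using (hasDerivAt_id x).const_sub 1
  have h3 : HasDerivAt (fun p : ℝ => (1 - p) * Real.log (1 - p))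
      ((Real.log (1 - x) + 1) * (-1)) x :=
    (Real.hasDerivAt_mul_log (ne_of_gt (by linarith : (0:ℝ) < 1 - x))).comp x h2
  have h4 : HasDerivAt (fun p : ℝ => p * Real.log μ) (Real.log μ) x := by
    simpa using (hasDerivAt_id x).mul_const (Real.log μ)
  have h5 : HasDerivAt (fun p : ℝ => (1 - p) * Real.log (1 - μ)) (-1 * Real.log (1 - μ)) x :=
    h2.mul_const _
  have hD : HasDerivAt (klAux μ)
      ((Real.log x + 1 - Real.log μ) + ((Real.log (1-x) + 1) * (-1) - -1 * Real.log (1-μ))) x :=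
    (h1.sub h4).add (h3.sub h5)
  rw [hD.deriv]
  have l1 : Real.log x < Real.log μ := Real.log_lt_log hx0 hxμ
  have l2 : Real.log (1 - μ) < Real.log (1 - x) := Real.log_lt_log (by linarith) (by linarith)
  linarith

-- the tilting construction
lemma tilt_exists {μ y' : ℝ} (hμ0 : 0 < μ) (hμ1 : μ < 1) (hy0 : 0 < y')
    (hyc : y' < klAux μ 0) :
    ∃ l : ℝ, l < 0 ∧ 0 < 1 - μ + μ * Real.exp l ∧
      ∀ p ∈ Set.Icc (0:ℝ) μ, y' ≤ klAux μ p →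
        y' ≤ l * p - Real.log (1 - μ + μ * Real.exp l) := by
  -- find z with klAux μ z = y'
  have hsub : Set.Icc (klAux μ μ) (klAux μ 0) ⊆ klAux μ '' Set.Icc 0 μ :=
    intermediate_value_Icc' hμ0.le (klAux_continuous μ).continuousOn
  obtain ⟨z, hzmem, hz⟩ := hsub ⟨by rw [klAux_self]; exact hy0.le, hyc.le⟩
  obtain ⟨hz0, hzμ⟩ := hzmem
  have hz0' : 0 < z := by
    rcases eq_or_lt_of_le hz0 with h | h
    · exfalso; rw [← h] at hz; exact hyc.ne' hz
    · exact h
  have hzμ' : z < μ := by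
    rcases eq_or_lt_of_le hzμ with h | h
    · exfalso; rw [h, klAux_self] at hz; linarith
    · exact h
  have hz1 : z < 1 := lt_trans hzμ' hμ1
  set t : ℝ := z * (1 - μ) / (μ * (1 - z)) with ht
  have htpos : 0 < t := by
    apply div_pos <;> nlinarith
  refine ⟨Real.log t, ?_, ?_, ?_⟩
  · apply Real.log_neg htpos
    rw [div_lt_one (by nlinarith)]
    nlinarith
  · rw [Real.exp_log htpos]
    have hz1' : (1:ℝ) - z ≠ 0 := ne_of_gt (by linarith)
    have : 1 - μ + μ * t = (1 - μ) / (1 - z) := by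
      rw [ht]; field_simp; ring
    rw [this]
    apply div_pos <;> linarith
  · intro p hp hyp
    rw [Real.exp_log htpos]
    have hz1' : (1:ℝ) - z ≠ 0 := ne_of_gt (by linarith)
    have hkey : 1 - μ + μ * t = (1 - μ) / (1 - z) := by
      rw [ht]; field_simp; ring
    rw [hkey]
    have hlogt : Real.log t = Real.log z + Real.log (1 - μ) - (Real.log μ + Real.log (1 - z)) := by
      rw [ht, Real.log_div (ne_of_gt (by nlinarith : (0:ℝ) < z * (1 - μ)))
        (ne_of_gt (by nlinarith : (0:ℝ) < μ * (1 - z))), Real.log_mul hz0'.ne'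
        (ne_of_gt (by linarith : (0:ℝ) < 1 - μ)),
        Real.log_mul hμ0.ne' (ne_of_gt (by linarith : (0:ℝ) < 1 - z))]
    have hlogq : Real.log ((1 - μ) / (1 - z)) = Real.log (1 - μ) - Real.log (1 - z) :=
      Real.log_div (ne_of_gt (by linarith)) (ne_of_gt (by linarith))
    -- identity at z
    have hidz : Real.log t * z - Real.log ((1 - μ) / (1 - z)) = klAux μ z := by
      rw [hlogt, hlogq]
      unfold klAux
      ring
    -- p ≤ z by strict antitonicity
    have hpz : p ≤ z := by
      by_contra h
      push_neg at h
      have := klAux_strictAntiOn hμ0 hμ1 ⟨hz0'.le, hzμ'.le⟩ hp h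
      rw [hz] at this
      linarith
    have hlt : Real.log t < 0 := by
      apply Real.log_neg htpos
      rw [div_lt_one (by nlinarith)]
      nlinarith
    have : Real.log t * z ≤ Real.log t * p := by nlinarith
    rw [hz] at hidz
    linarith


lemma ville_sup {Ω : Type*} [MeasurableSpace Ω] (P : Measure Ω) [IsProbabilityMeasure P]
    (Y : ℕ → Ω → ℝ) (hYmeas : ∀ i, Measurable (Y i))
    (hYindep : iIndepFun Y P)
    (hYpos : ∀ i ω, 0 ≤ Y i ω) (C : ℝ) (hC : 0 ≤ C) (hYbdd : ∀ i ω, Y i ω ≤ C)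
    (hYint : ∀ i, ∫ ω, Y i ω ∂P ≤ 1)
    (N : ℕ) (hN : 1 ≤ N) (c : ℝ) (hc : 0 < c) :
    P {ω | ∃ n, N ≤ n ∧ c ≤ ∏ i ∈ Finset.range n, Y i ω} ≤ ENNReal.ofReal (1 / c) := by
  classical
  set M : ℕ → Ω → ℝ := fun n ω => ∏ i ∈ Finset.range n, Y i ω with hM
  have hMmeas : ∀ n, Measurable (M n) := fun n =>
    Finset.measurable_prod _ (fun i _ => hYmeas i)
  have hMpos : ∀ n ω, 0 ≤ M n ω := fun n ω =>
    Finset.prod_nonneg fun i _ => hYpos i ω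
  have hMbdd : ∀ n ω, M n ω ≤ C ^ n := by
    intro n ω
    calc M n ω ≤ ∏ i ∈ Finset.range n, C :=
          Finset.prod_le_prod (fun i _ => hYpos i ω) (fun i _ => hYbdd i ω)
      _ = C ^ n := by simp
  have hint : ∀ (f : Ω → ℝ) (B : ℝ), Measurable f → (∀ ω, 0 ≤ f ω) → (∀ ω, f ω ≤ B) →
      Integrable f P := by
    intro f B hf h0 h1
    refine ⟨hf.aestronglyMeasurable, HasFiniteIntegral.of_bounded (C := B) ?_⟩
    filter_upwards with ω
    rw [Real.norm_eq_abs, abs_of_nonneg (h0 ω)]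
    exact h1 ω
  have hMint : ∀ n, Integrable (M n) P := fun n =>
    hint _ (C ^ n) (hMmeas n) (hMpos n) (hMbdd n)
  have hYint' : ∀ i, Integrable (Y i) P := fun i => hint _ C (hYmeas i) (hYpos i) (hYbdd i)
  -- independence helper
  have hindepG : ∀ (K : ℕ) (G : (ℕ → ℝ) → ℝ), Measurable G →
      (∀ u v : ℕ → ℝ, (∀ i < K, u i = v i) → G u = G v) →
      IndepFun (fun ω => G (fun i => Y i ω)) (Y K) P := by
    intro K G hG hdep
    have hdisj : Disjoint (Finset.range K) ({K} : Finset ℕ) := by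
      simp [Finset.disjoint_singleton_right]
    have h := hYindep.indepFun_finset (Finset.range K) {K} hdisj hYmeas
    have hφ : Measurable (fun v : ↥(Finset.range K) → ℝ =>
        G (fun i => if h : i ∈ Finset.range K then v ⟨i, h⟩ else 0)) := by
      refine hG.comp (measurable_pi_lambda _ fun i => ?_)
      by_cases h : i ∈ Finset.range K
      · simpa [h] using measurable_pi_apply (⟨i, h⟩ : ↥(Finset.range K))
      · simpa [h] using measurable_const
    have hψ : Measurable (fun v : ↥({K} : Finset ℕ) → ℝ =>
        v ⟨K, Finset.mem_singleton_self K⟩) := measurable_pi_apply _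
    have h2 := h.comp hφ hψ
    convert h2 using 1
    funext ω
    refine hdep _ _ fun i hi => ?_
    simp [Finset.mem_range.2 hi]
    rfl
  -- the first-entry sets
  set A : ℕ → Set Ω := fun n =>
    {ω | N ≤ n ∧ c ≤ M n ω ∧ ∀ m, N ≤ m → m < n → M m ω < c} with hA
  set B : ℕ → Set Ω := fun K => {ω | ∀ m, N ≤ m → m < K + 1 → M m ω < c} with hB
  have hAmem : ∀ n ω, ω ∈ A n ↔ (N ≤ n ∧ c ≤ M n ω ∧ ∀ m, N ≤ m → m < n → M m ω < c) := by
    intro n ω; simp only [hA, Set.mem_setOf_eq]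
  have hBmem : ∀ K ω, ω ∈ B K ↔ ∀ m, N ≤ m → m < K + 1 → M m ω < c := by
    intro K ω; simp only [hB, Set.mem_setOf_eq]
  have hAmeas : ∀ n, MeasurableSet (A n) := by
    intro n
    have : A n = (if N ≤ n then Set.univ else ∅) ∩ {ω | c ≤ M n ω} ∩
        ⋂ m ∈ Finset.Ico N n, {ω | M m ω < c} := by
      ext ω
      simp only [hAmem, Set.mem_inter_iff, Set.mem_iInter, Finset.mem_Ico, Set.mem_setOf_eq]
      constructor
      · rintro ⟨h1, h2, h3⟩
        exact ⟨⟨by simp [h1], h2⟩, fun m hm => h3 m hm.1 hm.2⟩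
      · rintro ⟨⟨h1, h2⟩, h3⟩
        refine ⟨?_, h2, fun m hm1 hm2 => h3 m ⟨hm1, hm2⟩⟩
        by_contra h
        simp [h] at h1
    rw [this]
    refine MeasurableSet.inter (MeasurableSet.inter ?_
        (measurableSet_le measurable_const (hMmeas n)))
      (MeasurableSet.biInter (Finset.Ico N n).countable_toSet
        fun m _ => measurableSet_lt (hMmeas m) measurable_const)
    split <;> simp
  have hBmeas : ∀ K, MeasurableSet (B K) := by
    intro K
    have : B K = ⋂ m ∈ Finset.Ico N (K+1), {ω | M m ω < c} := by
      ext ω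
      simp only [hBmem, Set.mem_iInter, Finset.mem_Ico, Set.mem_setOf_eq]
      exact ⟨fun h m hm => h m hm.1 hm.2, fun h m h1 h2 => h m ⟨h1, h2⟩⟩
    rw [this]
    exact MeasurableSet.biInter (Finset.Ico N (K+1)).countable_toSet
      fun m _ => measurableSet_lt (hMmeas m) measurable_const
  -- partition
  have hsplit : ∀ K, B K = A (K + 1) ∪ B (K + 1) ∧ Disjoint (A (K + 1)) (B (K + 1)) := by
    intro K
    constructor
    · ext ω
      simp only [Set.mem_union, hAmem, hBmem]
      constructor
      · intro hω
        by_cases hKN : N ≤ K + 1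
        · rcases le_or_gt c (M (K+1) ω) with h | h
          · exact Or.inl ⟨hKN, h, fun m h1 h2 => hω m h1 h2⟩
          · refine Or.inr fun m h1 h2 => ?_
            rcases Nat.lt_succ_iff_lt_or_eq.1 h2 with h' | h'
            · exact hω m h1 h'
            · subst h'; exact h
        · exact Or.inr fun m h1 h2 => hω m h1 (by omega)
      · rintro (⟨h1, h2, h3⟩ | h) m hm1 hm2
        · exact h3 m hm1 hm2
        · exact h m hm1 (by omega)
    · rw [Set.disjoint_left]
      intro ω hωA hωB
      rw [hAmem] at hωA
      rw [hBmem] at hωB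
      exact absurd hωA.2.1 (not_le.2 (hωB (K+1) hωA.1 (Nat.lt_succ_self _)))
  -- supermartingale step
  have hstep : ∀ K, ∫ ω in B K, M (K + 1) ω ∂P ≤ ∫ ω in B K, M K ω ∂P := by
    intro K
    set S : Set (ℕ → ℝ) := {u | ∀ m, N ≤ m → m < K + 1 → ∏ i ∈ Finset.range m, u i < c} with hS
    have hSmeas : MeasurableSet S := by
      have : S = ⋂ m ∈ Finset.Ico N (K+1), {u : ℕ → ℝ | ∏ i ∈ Finset.range m, u i < c} := by
        ext u; simp only [hS, Set.mem_iInter, Finset.mem_Ico, Set.mem_setOf_eq]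
        exact ⟨fun h m hm => h m hm.1 hm.2, fun h m h1 h2 => h m ⟨h1, h2⟩⟩
      rw [this]
      exact MeasurableSet.biInter (Finset.Ico N (K+1)).countable_toSet fun m _ =>
        measurableSet_lt (Finset.measurable_prod _ fun i _ => measurable_pi_apply i)
          measurable_const
    set G : (ℕ → ℝ) → ℝ := S.indicator (fun u => ∏ i ∈ Finset.range K, u i) with hG
    have hGmeas : Measurable G :=
      (Finset.measurable_prod _ fun i _ => measurable_pi_apply i).indicator hSmeas
    have hGdep : ∀ u v : ℕ → ℝ, (∀ i < K, u i = v i) → G u = G v := by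
      intro u v huv
      have hprod : ∀ m, m ≤ K → ∏ i ∈ Finset.range m, u i = ∏ i ∈ Finset.range m, v i := by
        intro m hm
        exact Finset.prod_congr rfl fun i hi => huv i (lt_of_lt_of_le (Finset.mem_range.1 hi) hm)
      have hmemS : u ∈ S ↔ v ∈ S := by
        simp only [hS, Set.mem_setOf_eq]
        constructor
        · intro h m h1 h2; rw [← hprod m (by omega)]; exact h m h1 h2
        · intro h m h1 h2; rw [hprod m (by omega)]; exact h m h1 h2
      simp only [hG, Set.indicator_apply]
      by_cases hu : u ∈ S
      · rw [if_pos hu, if_pos (hmemS.1 hu), hprod K le_rfl]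
      · rw [if_neg hu, if_neg (fun hv => hu (hmemS.2 hv))]
    have hmemYS : ∀ ω, ((fun i => Y i ω) ∈ S ↔ ω ∈ B K) := by
      intro ω
      simp only [hS, Set.mem_setOf_eq, hBmem]
      exact Iff.rfl
    have hGY : (fun ω => G (fun i => Y i ω)) = (B K).indicator (M K) := by
      funext ω
      simp only [hG, Set.indicator_apply]
      by_cases h : ω ∈ B K
      · rw [if_pos ((hmemYS ω).2 h), if_pos h]
      · rw [if_neg (fun hh => h ((hmemYS ω).1 hh)), if_neg h]
    have hindf := hindepG K G hGmeas hGdep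
    have hI1 : Integrable (fun ω => G (fun i => Y i ω)) P := by
      rw [hGY]
      refine hint _ (C ^ K) ((hMmeas K).indicator (hBmeas K)) ?_ ?_
      · intro ω; exact Set.indicator_nonneg (fun ω _ => hMpos K ω) ω
      · intro ω
        by_cases h : ω ∈ B K
        · rw [Set.indicator_of_mem h]; exact hMbdd K ω
        · rw [Set.indicator_of_notMem h]; exact pow_nonneg hC K
    have hmul := IndepFun.integral_mul_eq_mul_integral hindf hI1.aestronglyMeasurable (hYint' K).aestronglyMeasurable
    have hGY2 : (fun ω => G (fun i => Y i ω)) * Y K = (B K).indicator (M (K+1)) := by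
      funext ω
      simp only [Pi.mul_apply]
      rw [congrFun hGY ω]
      by_cases h : ω ∈ B K
      · rw [Set.indicator_of_mem h, Set.indicator_of_mem h]
        simp only [hM]
        rw [Finset.prod_range_succ]
      · rw [Set.indicator_of_notMem h, Set.indicator_of_notMem h, zero_mul]
    have hGnonneg : 0 ≤ ∫ ω, G (fun i => Y i ω) ∂P := by
      refine integral_nonneg fun ω => ?_
      rw [congrFun hGY ω]
      exact Set.indicator_nonneg (fun ω _ => hMpos K ω) ω
    calc ∫ ω in B K, M (K + 1) ω ∂P
        = ∫ ω, (B K).indicator (M (K+1)) ω ∂P := (integral_indicator (hBmeas K)).symm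
      _ = ∫ ω, ((fun ω => G (fun i => Y i ω)) * Y K) ω ∂P := by rw [hGY2]
      _ = (∫ ω, G (fun i => Y i ω) ∂P) * ∫ ω, Y K ω ∂P := hmul
      _ ≤ (∫ ω, G (fun i => Y i ω) ∂P) * 1 :=
          mul_le_mul_of_nonneg_left (hYint K) hGnonneg
      _ = ∫ ω, (B K).indicator (M K) ω ∂P := by rw [mul_one, hGY]
      _ = ∫ ω in B K, M K ω ∂P := integral_indicator (hBmeas K)
  -- main induction
  have hmain : ∀ K, (∑ n ∈ Finset.range (K+1), ∫ ω in A n, M n ω ∂P) + ∫ ω in B K, M K ω ∂P ≤ 1 := by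
    intro K
    induction K with
    | zero =>
      have hA0 : A 0 = ∅ := by
        ext ω; simp only [hAmem, Set.mem_empty_iff_false, iff_false]
        rintro ⟨h, -⟩; omega
      have hB0 : B 0 = Set.univ := by
        ext ω; simp only [hBmem, Set.mem_univ, iff_true]
        intro m h1 h2; omega
      have hM0 : M 0 = fun _ => (1:ℝ) := by
        funext ω; simp [hM]
      rw [hB0, hM0]
      rw [Finset.range_one, Finset.sum_singleton, hA0]
      simp
    | succ K ih =>
      have hsp := hsplit K
      have heq : ∫ ω in B K, M (K+1) ω ∂P
          = ∫ ω in A (K+1), M (K+1) ω ∂P + ∫ ω in B (K+1), M (K+1) ω ∂P := by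
        conv_lhs => rw [hsp.1]
        exact setIntegral_union hsp.2 (hBmeas (K+1)) ((hMint (K+1)).integrableOn)
          ((hMint (K+1)).integrableOn)
      have hsum : ∑ n ∈ Finset.range (K+2), ∫ ω in A n, M n ω ∂P
          = (∑ n ∈ Finset.range (K+1), ∫ ω in A n, M n ω ∂P) + ∫ ω in A (K+1), M (K+1) ω ∂P := by
        exact Finset.sum_range_succ _ (K+1)
      calc (∑ n ∈ Finset.range (K+2), ∫ ω in A n, M n ω ∂P) + ∫ ω in B (K+1), M (K+1) ω ∂P
          = (∑ n ∈ Finset.range (K+1), ∫ ω in A n, M n ω ∂P) +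
            (∫ ω in A (K+1), M (K+1) ω ∂P + ∫ ω in B (K+1), M (K+1) ω ∂P) := by
            rw [hsum]; ring
        _ = (∑ n ∈ Finset.range (K+1), ∫ ω in A n, M n ω ∂P) + ∫ ω in B K, M (K+1) ω ∂P := by
            rw [heq]
        _ ≤ (∑ n ∈ Finset.range (K+1), ∫ ω in A n, M n ω ∂P) + ∫ ω in B K, M K ω ∂P := by
            have := hstep K; linarith
        _ ≤ 1 := ih
  -- from integrals to measures
  have hkeyIic : ∀ K, ∑ n ∈ Finset.range (K+1), P (A n) ≤ ENNReal.ofReal (1 / c) := by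
    intro K
    have h1 : ∀ n, c * (P (A n)).toReal ≤ ∫ ω in A n, M n ω ∂P := by
      intro n
      refine setIntegral_ge_of_const_le_real (hAmeas n) (measure_ne_top P _) ?_
        ((hMint n).integrableOn)
      intro ω hω
      exact ((hAmem n ω).1 hω).2.1
    have h2 : ∑ n ∈ Finset.range (K+1), c * (P (A n)).toReal ≤ 1 := by
      have h3 : ∫ ω in B K, M K ω ∂P ≥ 0 :=
        setIntegral_nonneg (hBmeas K) fun ω _ => hMpos K ω
      calc ∑ n ∈ Finset.range (K+1), c * (P (A n)).toReal
          ≤ ∑ n ∈ Finset.range (K+1), ∫ ω in A n, M n ω ∂P :=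
            Finset.sum_le_sum fun n _ => h1 n
        _ ≤ 1 := by have := hmain K; linarith
    have h4 : ∑ n ∈ Finset.range (K+1), (P (A n)).toReal ≤ 1 / c := by
      rw [le_div_iff₀ hc]
      calc (∑ n ∈ Finset.range (K+1), (P (A n)).toReal) * c
          = ∑ n ∈ Finset.range (K+1), c * (P (A n)).toReal := by
            rw [Finset.sum_mul]; exact Finset.sum_congr rfl fun n _ => by ring
        _ ≤ 1 := h2
    calc ∑ n ∈ Finset.range (K+1), P (A n)
        = ∑ n ∈ Finset.range (K+1), ENNReal.ofReal ((P (A n)).toReal) := by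
          exact Finset.sum_congr rfl fun n _ => (ENNReal.ofReal_toReal (measure_ne_top P _)).symm
      _ = ENNReal.ofReal (∑ n ∈ Finset.range (K+1), (P (A n)).toReal) :=
          (ENNReal.ofReal_sum_of_nonneg fun n _ => ENNReal.toReal_nonneg).symm
      _ ≤ ENNReal.ofReal (1 / c) := ENNReal.ofReal_le_ofReal h4
  have hkey : ∀ s : Finset ℕ, ∑ n ∈ s, P (A n) ≤ ENNReal.ofReal (1 / c) := by
    intro s
    refine le_trans (Finset.sum_le_sum_of_subset fun n hn => Finset.mem_range.2 ?_)
      (hkeyIic (s.sup id))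
    exact Nat.lt_succ_of_le (Finset.le_sup (f := id) hn)
  have hdisjA : Pairwise (Function.onFun Disjoint A) := by
    have key : ∀ n m, n < m → Disjoint (A n) (A m) := by
      intro n m h
      rw [Set.disjoint_left]
      intro ω hn hm
      rw [hAmem] at hn hm
      exact absurd hn.2.1 (not_le.2 (hm.2.2 n hn.1 h))
    intro n m hnm
    rcases lt_or_gt_of_ne hnm with h | h
    · exact key n m h
    · exact (key m n h).symm
  have hsub : {ω | ∃ n, N ≤ n ∧ c ≤ M n ω} ⊆ ⋃ n, A n := by
    intro ω hω
    have hex : ∃ n, N ≤ n ∧ c ≤ M n ω := hω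
    refine Set.mem_iUnion.2 ⟨Nat.find hex, ?_⟩
    rw [hAmem]
    obtain ⟨h1, h2⟩ := Nat.find_spec hex
    refine ⟨h1, h2, fun m hm1 hm2 => ?_⟩
    by_contra h
    exact Nat.find_min hex hm2 ⟨hm1, not_lt.1 h⟩
  calc P {ω | ∃ n, N ≤ n ∧ c ≤ M n ω}
      ≤ P (⋃ n, A n) := measure_mono hsub
    _ = ∑' n, P (A n) := measure_iUnion hdisjA hAmeas
    _ ≤ ENNReal.ofReal (1 / c) := by
        rw [ENNReal.tsum_eq_iSup_sum]
        exact iSup_le hkey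

/-- Time-uniform lower-tail Chernoff bound in KL form: for i.i.d. `[0,1]`-valued
random variables with mean `μ`,
`P(∃ n ≥ N, kl(μ̂ₙ, μ) ≥ y ∧ μ̂ₙ < μ) ≤ e^{-Ny}`. -/
theorem maximal_chernoff_lower {Ω : Type*} [MeasurableSpace Ω]
    (P : Measure Ω) [IsProbabilityMeasure P]
    (X : ℕ → Ω → ℝ) (hmeas : ∀ i, Measurable (X i))
    (hindep : iIndepFun X P)
    (hident : ∀ i, IdentDistrib (X i) (X 0) P P)
    (μ : ℝ) (hbound : ∀ i, ∀ᵐ ω ∂P, X i ω ∈ Set.Icc (0:ℝ) 1)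
    (hmean : ∀ i, ∫ ω, X i ω ∂P = μ)
    (N : ℕ) (hN : 1 ≤ N) (y : ℝ) (hy : 0 ≤ y) :
    P {ω | ∃ n, N ≤ n ∧
        klBin ((∑ i ∈ Finset.range n, X i ω) / n) μ ≥ y ∧
        (∑ i ∈ Finset.range n, X i ω) / n < μ}
      ≤ ENNReal.ofReal (Real.exp (-(N : ℝ) * y)) := by
  classical
  -- dispose of y = 0
  rcases eq_or_lt_of_le hy with hy0 | hy0
  · rw [← hy0]
    simp only [mul_zero, Real.exp_zero, ENNReal.ofReal_one]
    exact prob_le_one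
  -- truncation
  set X' : ℕ → Ω → ℝ := fun i ω => max 0 (min 1 (X i ω)) with hX'
  have hX'meas : ∀ i, Measurable (X' i) := fun i =>
    measurable_const.max (measurable_const.min (hmeas i))
  have hX'mem : ∀ i ω, X' i ω ∈ Set.Icc (0:ℝ) 1 := by
    intro i ω
    constructor
    · exact le_max_left _ _
    · exact max_le zero_le_one (min_le_left _ _)
  have hX'ae : ∀ i, X' i =ᵐ[P] X i := by
    intro i
    filter_upwards [hbound i] with ω hω
    obtain ⟨h0, h1⟩ := hω
    simp only [hX']
    rw [min_eq_right h1, max_eq_right h0]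
  have hX'mean : ∀ i, ∫ ω, X' i ω ∂P = μ := fun i =>
    (integral_congr_ae (hX'ae i)).trans (hmean i)
  have hX'indep : iIndepFun X' P := by
    have h := hindep.comp (fun _ (t : ℝ) => max 0 (min 1 t))
      (fun _ => measurable_const.max (measurable_const.min measurable_id))
    exact h
  have hX'int : ∀ i, Integrable (X' i) P := by
    intro i
    refine ⟨(hX'meas i).aestronglyMeasurable, HasFiniteIntegral.of_bounded (C := 1) ?_⟩
    filter_upwards with ω
    rw [Real.norm_eq_abs, abs_of_nonneg (hX'mem i ω).1]
    exact (hX'mem i ω).2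
  -- μ is in [0,1]
  have hμ0 : 0 ≤ μ := by
    rw [← hX'mean 0]
    exact integral_nonneg fun ω => (hX'mem 0 ω).1
  have hμ1 : μ ≤ 1 := by
    rw [← hX'mean 0]
    calc ∫ ω, X' 0 ω ∂P ≤ ∫ _, (1:ℝ) ∂P :=
        integral_mono (hX'int 0) (integrable_const 1) (fun ω => (hX'mem 0 ω).2)
      _ = 1 := by simp
  -- reduce to the truncated event
  set E' : Set Ω := {ω | ∃ n, N ≤ n ∧
      klBin ((∑ i ∈ Finset.range n, X' i ω) / n) μ ≥ y ∧
      (∑ i ∈ Finset.range n, X' i ω) / n < μ} with hE'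
  have hred : P {ω | ∃ n, N ≤ n ∧
      klBin ((∑ i ∈ Finset.range n, X i ω) / n) μ ≥ y ∧
      (∑ i ∈ Finset.range n, X i ω) / n < μ} ≤ P E' := by
    have hnull : P (⋃ i, {ω | ¬ (X' i ω = X i ω)}) = 0 := by
      refine measure_iUnion_null fun i => ?_
      rw [← ae_iff]
      exact hX'ae i
    have hsub : {ω | ∃ n, N ≤ n ∧
        klBin ((∑ i ∈ Finset.range n, X i ω) / n) μ ≥ y ∧
        (∑ i ∈ Finset.range n, X i ω) / n < μ} ⊆ E' ∪ ⋃ i, {ω | ¬ (X' i ω = X i ω)} := by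
      intro ω hω
      by_cases hg : ∀ i, X' i ω = X i ω
      · left
        obtain ⟨n, hn1, hn2, hn3⟩ := hω
        refine ⟨n, hn1, ?_, ?_⟩
        · rwa [Finset.sum_congr rfl fun i _ => hg i]
        · rwa [Finset.sum_congr rfl fun i _ => hg i]
      · right
        push_neg at hg
        obtain ⟨i, hi⟩ := hg
        exact Set.mem_iUnion.2 ⟨i, hi⟩
    calc P _ ≤ P (E' ∪ ⋃ i, {ω | ¬ (X' i ω = X i ω)}) := measure_mono hsub
      _ ≤ P E' + P (⋃ i, {ω | ¬ (X' i ω = X i ω)}) := measure_union_le _ _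
      _ = P E' := by rw [hnull, add_zero]
  refine le_trans hred ?_
  -- pointwise facts about empirical means
  have hmuhat : ∀ n ω, 1 ≤ n → (∑ i ∈ Finset.range n, X' i ω) / n ∈ Set.Icc (0:ℝ) 1 := by
    intro n ω hn
    have hnpos : (0:ℝ) < n := by exact_mod_cast hn
    constructor
    · apply div_nonneg _ hnpos.le
      exact Finset.sum_nonneg fun i _ => (hX'mem i ω).1
    · rw [div_le_one hnpos]
      calc ∑ i ∈ Finset.range n, X' i ω ≤ ∑ _i ∈ Finset.range n, (1:ℝ) :=
          Finset.sum_le_sum fun i _ => (hX'mem i ω).2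
        _ = n := by simp
  -- case μ = 0
  rcases eq_or_lt_of_le hμ0 with hμ0' | hμ0'
  · have : E' = ∅ := by
      ext ω
      simp only [hE', Set.mem_setOf_eq, Set.mem_empty_iff_false, iff_false]
      rintro ⟨n, hn1, -, hn3⟩
      have := (hmuhat n ω (le_trans hN hn1)).1
      rw [← hμ0'] at hn3
      linarith
    rw [this]
    simp
  -- case μ = 1
  rcases eq_or_lt_of_le hμ1 with hμ1' | hμ1'
  · have : E' = ∅ := by
      ext ω
      simp only [hE', Set.mem_setOf_eq, Set.mem_empty_iff_false, iff_false]
      rintro ⟨n, hn1, hn2, hn3⟩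
      set p := (∑ i ∈ Finset.range n, X' i ω) / n with hp
      have hmem := hmuhat n ω (le_trans hN hn1)
      have hkl : klBin p 1 = p * Real.log p := by
        unfold klBin
        simp
      rw [hμ1'] at hn2
      rw [hkl] at hn2
      have : p * Real.log p ≤ 0 := by
        rcases eq_or_lt_of_le hmem.1 with h | h
        · rw [hp, ← h]; simp
        · have : Real.log p ≤ 0 := Real.log_nonpos hmem.1 hmem.2
          nlinarith
      linarith
    rw [this]
    simp
  -- main case: 0 < μ < 1
  -- approximate y from below
  have hmono : ∀ y', 0 < y' → y' < y → P E' ≤ ENNReal.ofReal (Real.exp (-(N:ℝ) * y')) := by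
    intro y' hy'0 hy'y
    by_cases hyc : klAux μ 0 ≤ y'
    · -- event is empty
      have : E' = ∅ := by
        ext ω
        simp only [hE', Set.mem_setOf_eq, Set.mem_empty_iff_false, iff_false]
        rintro ⟨n, hn1, hn2, hn3⟩
        set p := (∑ i ∈ Finset.range n, X' i ω) / n with hp
        have hmem := hmuhat n ω (le_trans hN hn1)
        have hple : klAux μ p ≤ klAux μ 0 := by
          rcases eq_or_lt_of_le hmem.1 with h | h
          · rw [hp, ← h]
          · exact le_of_lt (klAux_strictAntiOn hμ0' hμ1' (Set.left_mem_Icc.2 hμ0)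
              ⟨hmem.1, hn3.le⟩ h)
        rw [klBin_eq_klAux hμ0' hμ1' hmem.1 hmem.2] at hn2
        linarith
      rw [this]
      simp
    · push_neg at hyc
      obtain ⟨l, hl0, hgpos, hl⟩ := tilt_exists hμ0' hμ1' hy'0 hyc
      set g : ℝ := Real.log (1 - μ + μ * Real.exp l) with hg
      set Y : ℕ → Ω → ℝ := fun i ω => Real.exp (l * X' i ω - g) with hY
      have hYmeas : ∀ i, Measurable (Y i) :=
        fun i => (Real.measurable_exp.comp (((hX'meas i).const_mul l).sub measurable_const))
      have hYindep : iIndepFun Y P := by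
        have h := hX'indep.comp (fun _ (t : ℝ) => Real.exp (l * t - g))
          (fun _ => Real.measurable_exp.comp ((measurable_id.const_mul l).sub measurable_const))
        exact h
      have hYpos : ∀ i ω, 0 ≤ Y i ω := fun i ω => (Real.exp_pos _).le
      have hYbdd : ∀ i ω, Y i ω ≤ Real.exp (-g) := by
        intro i ω
        apply Real.exp_le_exp.2
        have h1 : l * X' i ω ≤ 0 :=
          mul_nonpos_of_nonpos_of_nonneg hl0.le (hX'mem i ω).1
        linarith
      have hYint : ∀ i, ∫ ω, Y i ω ∂P ≤ 1 := by
        intro i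
        have hexp : ∀ ω, Y i ω = Real.exp (l * X' i ω) * Real.exp (-g) := by
          intro ω; rw [hY]; rw [← Real.exp_add]; ring_nf
        have hint1 : Integrable (fun ω => Real.exp (l * X' i ω)) P := by
          refine ⟨(Real.measurable_exp.comp ((hX'meas i).const_mul l)).aestronglyMeasurable,
            HasFiniteIntegral.of_bounded (C := Real.exp |l|) ?_⟩
          filter_upwards with ω
          rw [Real.norm_eq_abs, abs_of_nonneg (Real.exp_pos _).le]
          apply Real.exp_le_exp.2
          calc l * X' i ω ≤ |l * X' i ω| := le_abs_self _
            _ = |l| * |X' i ω| := abs_mul _ _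
            _ ≤ |l| * 1 := by
                apply mul_le_mul_of_nonneg_left _ (abs_nonneg l)
                rw [abs_of_nonneg (hX'mem i ω).1]; exact (hX'mem i ω).2
            _ = |l| := mul_one _
        have hint2 : Integrable (fun ω => 1 - X' i ω + X' i ω * Real.exp l) P := by
          exact (((integrable_const 1).sub (hX'int i)).add ((hX'int i).mul_const _))
        have hle : ∫ ω, Real.exp (l * X' i ω) ∂P ≤ 1 - μ + μ * Real.exp l := by
          calc ∫ ω, Real.exp (l * X' i ω) ∂P
              ≤ ∫ ω, (1 - X' i ω + X' i ω * Real.exp l) ∂P := by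
                refine integral_mono hint1 hint2 fun ω => ?_
                exact exp_le_affine (hX'mem i ω).1 (hX'mem i ω).2
            _ = 1 - μ + μ * Real.exp l := by
                have h1 : ∫ ω, (1 - X' i ω + X' i ω * Real.exp l) ∂P
                    = (∫ ω, (1 - X' i ω) ∂P) + ∫ ω, X' i ω * Real.exp l ∂P :=
                  integral_add ((integrable_const 1).sub (hX'int i)) ((hX'int i).mul_const _)
                have h2 : ∫ ω, (1 - X' i ω) ∂P = (∫ _ω, (1:ℝ) ∂P) - ∫ ω, X' i ω ∂P :=
                  integral_sub (integrable_const 1) (hX'int i)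
                rw [h1, h2, integral_mul_const, hX'mean i]
                simp [mul_comm]
        calc ∫ ω, Y i ω ∂P = (∫ ω, Real.exp (l * X' i ω) ∂P) * Real.exp (-g) := by
              rw [← integral_mul_const]
              exact integral_congr_ae (Filter.Eventually.of_forall hexp)
          _ ≤ (1 - μ + μ * Real.exp l) * Real.exp (-g) :=
              mul_le_mul_of_nonneg_right hle (Real.exp_pos _).le
          _ = 1 := by
              rw [hg, Real.exp_neg, Real.exp_log hgpos]
              field_simp
      -- the event inclusion
      have hEsub : E' ⊆ {ω | ∃ n, N ≤ n ∧
          Real.exp ((N:ℝ) * y') ≤ ∏ i ∈ Finset.range n, Y i ω} := by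
        intro ω hω
        obtain ⟨n, hn1, hn2, hn3⟩ := hω
        refine ⟨n, hn1, ?_⟩
        set p := (∑ i ∈ Finset.range n, X' i ω) / n with hp
        have hmem := hmuhat n ω (le_trans hN hn1)
        have hnpos : (0:ℝ) < n := by
          have h1n : (1:ℕ) ≤ n := le_trans hN hn1
          exact_mod_cast lt_of_lt_of_le Nat.zero_lt_one h1n
        have hkl : y' ≤ klAux μ p := by
          rw [klBin_eq_klAux hμ0' hμ1' hmem.1 hmem.2] at hn2
          linarith
        have hlp := hl p ⟨hmem.1, hn3.le⟩ hkl
        have hsum : ∑ i ∈ Finset.range n, X' i ω = n * p := by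
          rw [hp, mul_div_cancel₀]
          exact hnpos.ne'
        have hprod : ∏ i ∈ Finset.range n, Y i ω
            = Real.exp (l * (∑ i ∈ Finset.range n, X' i ω) - n * g) := by
          rw [← Real.exp_sum]
          congr 1
          rw [Finset.sum_sub_distrib, ← Finset.mul_sum, Finset.sum_const,
            Finset.card_range, nsmul_eq_mul]
        rw [hprod, hsum]
        apply Real.exp_le_exp.2
        have hNn : (N:ℝ) ≤ n := by exact_mod_cast hn1
        have h1 : (N:ℝ) * y' ≤ n * y' := mul_le_mul_of_nonneg_right hNn hy'0.le
        have h2 : (n:ℝ) * y' ≤ n * (l * p - g) :=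
          mul_le_mul_of_nonneg_left hlp hnpos.le
        calc (N:ℝ) * y' ≤ n * (l * p - g) := le_trans h1 h2
          _ = l * (n * p) - n * g := by ring
      calc P E' ≤ P {ω | ∃ n, N ≤ n ∧
            Real.exp ((N:ℝ) * y') ≤ ∏ i ∈ Finset.range n, Y i ω} := measure_mono hEsub
        _ ≤ ENNReal.ofReal (1 / Real.exp ((N:ℝ) * y')) :=
            ville_sup P Y hYmeas hYindep hYpos (Real.exp (-g)) (Real.exp_pos _).le hYbdd
              hYint N hN _ (Real.exp_pos _)
        _ = ENNReal.ofReal (Real.exp (-(N:ℝ) * y')) := by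
            rw [one_div, ← Real.exp_neg]
            ring_nf
  -- take the limit y' → y
  have hfin : P E' ≠ ⊤ := measure_ne_top P E'
  set r : ℝ := (P E').toReal with hr
  have hPr : P E' = ENNReal.ofReal r := (ENNReal.ofReal_toReal hfin).symm
  have hr1 : r ≤ 1 := by
    rw [hr]
    exact ENNReal.toReal_le_of_le_ofReal zero_le_one (by simpa using prob_le_one (μ := P) (s := E'))
  have hrle : ∀ y', 0 < y' → y' < y → r ≤ Real.exp (-(N:ℝ) * y') := by
    intro y' h1 h2
    have := hmono y' h1 h2
    rw [hPr] at this
    exact (ENNReal.ofReal_le_ofReal_iff (Real.exp_pos _).le).1 this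
  have hfinal : r ≤ Real.exp (-(N:ℝ) * y) := by
    by_contra hcon
    push_neg at hcon
    set t : ℝ := (r + Real.exp (-(N:ℝ) * y)) / 2 with htdef
    have ht1 : Real.exp (-(N:ℝ) * y) < t := by rw [htdef]; linarith
    have ht2 : t < r := by rw [htdef]; linarith
    have htpos : 0 < t := lt_trans (Real.exp_pos _) ht1
    have htlt1 : t < 1 := lt_of_lt_of_le ht2 hr1
    set y' : ℝ := -Real.log t / N with hy'def
    have hNpos : (0:ℝ) < N := by exact_mod_cast hN
    have hlogt : Real.log t < 0 := Real.log_neg htpos htlt1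
    have hy'pos : 0 < y' := by
      rw [hy'def]; exact div_pos (by linarith) hNpos
    have hlog2 : -(N:ℝ) * y < Real.log t := by
      have h := Real.log_lt_log (Real.exp_pos _) ht1
      rwa [Real.log_exp] at h
    have hy'y : y' < y := by
      rw [hy'def, div_lt_iff₀ hNpos]
      linarith
    have hexpy' : Real.exp (-(N:ℝ) * y') = t := by
      have heq : -(N:ℝ) * y' = Real.log t := by
        rw [hy'def]; field_simp
      rw [heq, Real.exp_log htpos]
    have hcontr := hrle y' hy'pos hy'y
    rw [hexpy'] at hcontr
    linarith
  rw [hPr]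
  exact ENNReal.ofReal_le_ofReal hfinal
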